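/- arXiv:2005.09872 — 4 statements merged into one kernel-verified Lean document; each statement's English description precedes it below -/
import Mathlib

section
/- Let A be an n×n real matrix and P a symmetric positive definite matrix with AᵀP + PA ≤ 0 (negative semidefinite). Let b ∈ ℝⁿ and suppose the pair (A, b) is controllable, i.e., the matrix [b, Ab, ..., A^{n−1}b] has rank n. Then the only solution x : ℝ → ℝⁿ of ẋ = Ax satisfying both bᵀP x(t) = 0 and x(t)ᵀ(AᵀP + PA)x(t) = 0 for all t is x ≡ 0. -/
open Matrix

/-- Jurdjevic–Quinn condition for `ẋ = Ax` with metric `P`: if `AᵀP + PA ≤ 0`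
and `(A, b)` is controllable, then the only solution of `ẋ = Ax` along which
both `bᵀPx ≡ 0` and `xᵀ(AᵀP + PA)x ≡ 0` is the zero solution. -/
theorem stmt8 (n : ℕ) (A P : Matrix (Fin n) (Fin n) ℝ)
    (hPsymm : P.IsSymm) (hPpos : P.PosDef)
    (hdiss : ∀ φ : Fin n → ℝ, φ ⬝ᵥ ((Aᵀ * P + P * A) *ᵥ φ) ≤ 0)
    (b : Fin n → ℝ)
    (hctrb : Submodule.span ℝ (Set.range fun k : Fin n => (A ^ (k : ℕ)) *ᵥ b) = ⊤)
    (x : ℝ → Fin n → ℝ)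
    (hx : ∀ t : ℝ, HasDerivAt x (A *ᵥ x t) t)
    (horth : ∀ t : ℝ, b ⬝ᵥ (P *ᵥ x t) = 0)
    (hcons : ∀ t : ℝ, x t ⬝ᵥ ((Aᵀ * P + P * A) *ᵥ x t) = 0) :
    ∀ t : ℝ, x t = 0 := by
  -- Q := -(AᵀP + PA) is positive semidefinite
  set Q : Matrix (Fin n) (Fin n) ℝ := -(Aᵀ * P + P * A) with hQ
  have hQsymm : Q.IsHermitian := by
    have : Qᵀ = Q := by
      simp [hQ, Matrix.transpose_add, Matrix.transpose_mul, hPsymm.eq]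
      rw [add_comm]
    simpa [Matrix.IsHermitian, Matrix.conjTranspose_eq_transpose_of_trivial] using this
  have hQpsd : Q.PosSemidef := by
    refine Matrix.PosSemidef.of_dotProduct_mulVec_nonneg hQsymm fun φ => ?_
    have := hdiss φ
    simp only [hQ, Matrix.neg_mulVec, dotProduct_neg, star_trivial]
    linarith
  -- along the trajectory, (AᵀP + PA) x t = 0
  have hker : ∀ t, (Aᵀ * P + P * A) *ᵥ x t = 0 := by
    intro t
    have h0 : star (x t) ⬝ᵥ Q *ᵥ x t = 0 := by
      rw [star_trivial, hQ, Matrix.neg_mulVec, dotProduct_neg, hcons t, neg_zero]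
    have h1 := (hQpsd.dotProduct_mulVec_zero_iff (x t)).mp h0
    rw [hQ, Matrix.neg_mulVec, neg_eq_zero] at h1
    exact h1
  -- key invariance: (Aᵏ b)ᵀ P x(t) = 0 for all k
  have key : ∀ k : ℕ, ∀ t, (A ^ k *ᵥ b) ⬝ᵥ (P *ᵥ x t) = 0 := by
    intro k
    induction k with
    | zero => simpa using horth
    | succ k ih =>
      intro t
      -- derivative of t ↦ (Aᵏ b)ᵀ P x(t)
      set c : Fin n → ℝ := A ^ k *ᵥ b with hc
      have hder : HasDerivAt (fun t => c ⬝ᵥ (P *ᵥ x t)) (c ⬝ᵥ (P *ᵥ (A *ᵥ x t))) t := by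
        have hxi := hasDerivAt_pi.mp (hx t)
        have : HasDerivAt (fun s => ∑ i, c i * (P *ᵥ x s) i)
            (∑ i, c i * (P *ᵥ (A *ᵥ x t)) i) t := by
          apply HasDerivAt.fun_sum
          intro i _
          have hPi : HasDerivAt (fun s => (P *ᵥ x s) i) ((P *ᵥ (A *ᵥ x t)) i) t := by
            have : HasDerivAt (fun s => ∑ j, P i j * x s j)
                (∑ j, P i j * (A *ᵥ x t) j) t := by
              apply HasDerivAt.fun_sum
              intro j _
              exact (hxi j).const_mul (P i j)
            simpa [Matrix.mulVec, dotProduct] using this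
          exact hPi.const_mul (c i)
        simpa [dotProduct] using this
      have hzero : (fun s => c ⬝ᵥ (P *ᵥ x s)) = fun _ => (0:ℝ) := funext fun s => ih s
      have hd0 : c ⬝ᵥ (P *ᵥ (A *ᵥ x t)) = 0 := by
        have := hzero ▸ hder
        exact this.unique (hasDerivAt_const t 0)
      -- rewrite using (AᵀP + PA) x = 0
      have hPA : P *ᵥ (A *ᵥ x t) = -(Aᵀ *ᵥ (P *ᵥ x t)) := by
        have h := hker t
        have : (Aᵀ * P) *ᵥ x t + (P * A) *ᵥ x t = 0 := by
          simpa [Matrix.add_mulVec] using h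
        have h2 : (P * A) *ᵥ x t = -((Aᵀ * P) *ᵥ x t) := eq_neg_of_add_eq_zero_right this
        calc P *ᵥ (A *ᵥ x t) = (P * A) *ᵥ x t := by rw [Matrix.mulVec_mulVec]
          _ = -((Aᵀ * P) *ᵥ x t) := h2
          _ = -(Aᵀ *ᵥ (P *ᵥ x t)) := by rw [Matrix.mulVec_mulVec]
      rw [hPA] at hd0
      have : (A *ᵥ c) ⬝ᵥ (P *ᵥ x t) = 0 := by
        have h3 : c ⬝ᵥ (Aᵀ *ᵥ (P *ᵥ x t)) = 0 := by
          simpa using hd0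
        rw [Matrix.dotProduct_mulVec, Matrix.vecMul_transpose] at h3
        exact h3
      have hA : A ^ (k + 1) *ᵥ b = A *ᵥ c := by
        rw [hc, Matrix.mulVec_mulVec, ← pow_succ']
      rw [hA]
      exact this
  -- conclude: P x(t) ⟂ everything, hence P x(t) = 0, hence x(t) = 0
  intro t
  have hall : ∀ v : Fin n → ℝ, v ⬝ᵥ (P *ᵥ x t) = 0 := by
    intro v
    have hv : v ∈ Submodule.span ℝ (Set.range fun k : Fin n => (A ^ (k : ℕ)) *ᵥ b) := by
      rw [hctrb]; trivial
    induction hv using Submodule.span_induction with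
    | mem w hw =>
      obtain ⟨k, rfl⟩ := hw
      exact key k t
    | zero => simp
    | add u w _ _ hu hw => simp [add_dotProduct, hu, hw]
    | smul a u _ hu => simp [smul_dotProduct, hu]
  have hPx : P *ᵥ x t = 0 := by
    have := hall (P *ᵥ x t)
    exact dotProduct_self_eq_zero.mp this
  by_contra hne
  have := hPpos.dotProduct_mulVec_pos hne
  rw [star_trivial, hPx] at this
  simp at this
end

section
/- Let f(x, u) = Ax + b(x)u with A ∈ ℝ^{n×n} and b : ℝⁿ → ℝⁿ of class C¹. Let P be a symmetric positive definite matrix. Then the system is weakly contractive with respect to the constant metric P for all u ∈ ℝ (i.e., for every fixed u, Dₓf(x,u)ᵀP + P·Dₓf(x,u) ≤ 0 for all x) if and only if AᵀP + PA ≤ 0 and Db(x)ᵀP + P·Db(x) = 0 for all x. -/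
open Matrix

/-- The system `f(x,u) = Ax + u·b(x)` is weakly contractive w.r.t. the constant
metric `P` for every `u ∈ ℝ` iff `AᵀP + PA ≤ 0` and the Lie derivative of the
metric along `b` vanishes. -/
theorem stmt10 (n : ℕ) (A P : Matrix (Fin n) (Fin n) ℝ)
    (hPsymm : P.IsSymm) (hPpos : P.PosDef)
    (b : (Fin n → ℝ) → Fin n → ℝ) (hb : ContDiff ℝ 1 b) :
    (∀ (u : ℝ) (x φ : Fin n → ℝ),
        (fderiv ℝ (fun y => A *ᵥ y + u • b y) x φ) ⬝ᵥ (P *ᵥ φ)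
          + φ ⬝ᵥ (P *ᵥ (fderiv ℝ (fun y => A *ᵥ y + u • b y) x φ)) ≤ 0)
    ↔
    ((∀ φ : Fin n → ℝ, (A *ᵥ φ) ⬝ᵥ (P *ᵥ φ) + φ ⬝ᵥ (P *ᵥ (A *ᵥ φ)) ≤ 0) ∧
     (∀ x φ : Fin n → ℝ,
        (fderiv ℝ b x φ) ⬝ᵥ (P *ᵥ φ) + φ ⬝ᵥ (P *ᵥ (fderiv ℝ b x φ)) = 0)) := by
  have hbd : Differentiable ℝ b := hb.differentiable one_ne_zero
  have hder : ∀ (u : ℝ) (x φ : Fin n → ℝ),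
      fderiv ℝ (fun y => A *ᵥ y + u • b y) x φ
        = A *ᵥ φ + u • (fderiv ℝ b x φ) := by
    intro u x φ
    have h1 : HasFDerivAt (fun y : Fin n → ℝ => A *ᵥ y + u • b y)
        ((A.mulVecLin.toContinuousLinearMap : (Fin n → ℝ) →L[ℝ] (Fin n → ℝ))
          + u • fderiv ℝ b x) x := by
      exact (A.mulVecLin.toContinuousLinearMap.hasFDerivAt).add
        (((hbd x).hasFDerivAt).const_smul u)
    rw [h1.fderiv]
    simp
  constructor
  · intro h
    -- rewrite the hypothesis in c + u*d form
    have h' : ∀ (u : ℝ) (x φ : Fin n → ℝ),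
        ((A *ᵥ φ) ⬝ᵥ (P *ᵥ φ) + φ ⬝ᵥ (P *ᵥ (A *ᵥ φ)))
          + u * ((fderiv ℝ b x φ) ⬝ᵥ (P *ᵥ φ) + φ ⬝ᵥ (P *ᵥ (fderiv ℝ b x φ))) ≤ 0 := by
      intro u x φ
      have := h u x φ
      rw [hder u x φ] at this
      simp only [Matrix.mulVec_add, Matrix.mulVec_smul, add_dotProduct, smul_dotProduct,
        dotProduct_add, dotProduct_smul, smul_eq_mul] at this
      linarith
    constructor
    · intro φ
      have := h' 0 0 φ
      simpa using this
    · intro x φ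
      by_contra hd
      set d := (fderiv ℝ b x φ) ⬝ᵥ (P *ᵥ φ) + φ ⬝ᵥ (P *ᵥ (fderiv ℝ b x φ)) with hdset
      set c := (A *ᵥ φ) ⬝ᵥ (P *ᵥ φ) + φ ⬝ᵥ (P *ᵥ (A *ᵥ φ)) with hcset
      have := h' ((1 - c) / d) x φ
      rw [div_mul_cancel₀ _ hd] at this
      linarith
  · rintro ⟨hA, hLie⟩ u x φ
    rw [hder u x φ]
    have key : (A *ᵥ φ + u • fderiv ℝ b x φ) ⬝ᵥ (P *ᵥ φ)
        + φ ⬝ᵥ (P *ᵥ (A *ᵥ φ + u • fderiv ℝ b x φ))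
        = ((A *ᵥ φ) ⬝ᵥ (P *ᵥ φ) + φ ⬝ᵥ (P *ᵥ (A *ᵥ φ)))
          + u * ((fderiv ℝ b x φ) ⬝ᵥ (P *ᵥ φ) + φ ⬝ᵥ (P *ᵥ (fderiv ℝ b x φ))) := by
      simp [Matrix.mulVec_add, Matrix.mulVec_smul, add_dotProduct, smul_dotProduct,
        dotProduct_add, dotProduct_smul, smul_eq_mul]
      ring
    rw [key, hLie x φ, mul_zero, add_zero]
    exact hA φ
end

section
/- Let Γ : [s₁,s₂] × ℝ≥0 → ℝⁿ be defined by Γ(s,t) = X(γ(s), t), where X is the C² flow of a time-dependent C¹ vector field F_t on ℝⁿ and γ is a C² path. Let g be a C¹ Riemannian metric on ℝⁿ with (L_{F_t} g) ≤ 0 for all t. Then ∂/∂t [ g(Γ(s,t))(∂Γ/∂s(s,t), ∂Γ/∂s(s,t)) ] = (L_{F_t} g)(Γ(s,t))(∂Γ/∂s(s,t), ∂Γ/∂s(s,t)) ≤ 0. -/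
open Matrix

/-- Lie derivative of a metric `G` (given as a field of bilinear forms) along a
vector field `F`:
`L_F G(x)(φ,ψ) = DG(x)(F(x))(φ,ψ) + G(x)(DF(x)φ, ψ) + G(x)(φ, DF(x)ψ)`. -/
noncomputable def lieDerivG (n : ℕ)
    (G : (Fin n → ℝ) → (Fin n → ℝ) → (Fin n → ℝ) → ℝ)
    (F : (Fin n → ℝ) → Fin n → ℝ) (x φ ψ : Fin n → ℝ) : ℝ :=
  fderiv ℝ (fun y => G y φ ψ) x (F x)
    + G x (fderiv ℝ F x φ) ψ + G x φ (fderiv ℝ F x ψ)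

/-- Bilinear expansion of `G` in the coordinate basis. -/
lemma G_expand {n : ℕ} {G : (Fin n → ℝ) → (Fin n → ℝ) → (Fin n → ℝ) → ℝ}
    (hGsymm : ∀ x φ ψ, G x φ ψ = G x ψ φ)
    (hGlin : ∀ x ψ, IsLinearMap ℝ (fun φ => G x φ ψ))
    (x φ ψ : Fin n → ℝ) :
    G x φ ψ = ∑ i, ∑ j, φ i * ψ j * G x (Pi.single i 1) (Pi.single j 1) := by
  have hrep : ∀ χ : Fin n → ℝ, χ = ∑ i, χ i • (Pi.single i 1 : Fin n → ℝ) := by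
    intro χ; funext k
    simp [Finset.sum_apply, Pi.single_apply]
  have lin1 : ∀ (φ ψ : Fin n → ℝ), G x φ ψ = ∑ i, φ i * G x (Pi.single i 1) ψ := by
    intro φ ψ
    set L := IsLinearMap.mk' _ (hGlin x ψ) with hL
    have hLφ : ∀ χ, G x χ ψ = L χ := fun _ => rfl
    rw [hLφ φ]
    conv_lhs => rw [hrep φ]
    rw [map_sum]
    exact Finset.sum_congr rfl fun i _ => by rw [_root_.map_smul]; rfl
  calc G x φ ψ = ∑ i, φ i * G x (Pi.single i 1) ψ := lin1 φ ψ
    _ = ∑ i, φ i * ∑ j, ψ j * G x (Pi.single j 1) (Pi.single i 1) := by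
        refine Finset.sum_congr rfl fun i _ => ?_
        rw [hGsymm x (Pi.single i 1) ψ, lin1 ψ (Pi.single i 1)]
    _ = ∑ i, ∑ j, φ i * ψ j * G x (Pi.single i 1) (Pi.single j 1) := by
        refine Finset.sum_congr rfl fun i _ => ?_
        rw [Finset.mul_sum]
        exact Finset.sum_congr rfl fun j _ => by rw [hGsymm x (Pi.single j 1)]; ring

/-- Equality of mixed partials for the flow map: the `s`-derivative of
`Γ(s,t) = X(γ s, t)` evolves along the linearized vector field. -/
lemma mixed_partial {n : ℕ}
    (F : ℝ → (Fin n → ℝ) → Fin n → ℝ) (hF : ContDiff ℝ 1 (Function.uncurry F))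
    (X : (Fin n → ℝ) → ℝ → Fin n → ℝ) (hX : ContDiff ℝ 2 (Function.uncurry X))
    (hXflow : ∀ x t, HasDerivAt (X x) (F t (X x t)) t)
    (γ : ℝ → Fin n → ℝ) (hγ : ContDiff ℝ 2 γ) (s t : ℝ) :
    HasDerivAt (fun τ => deriv (fun σ => X (γ σ) τ) s)
      (fderiv ℝ (F t) (X (γ s) t) (deriv (fun σ => X (γ σ) t) s)) t := by
  set f : ℝ × ℝ → Fin n → ℝ := fun p => X (γ p.1) p.2 with hfdef
  have hf : ContDiff ℝ 2 f :=
    hX.comp ((hγ.comp contDiff_fst).prodMk contDiff_snd)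
  have hfd : ∀ p, HasFDerivAt f (fderiv ℝ f p) p :=
    fun p => (hf.differentiable two_ne_zero p).hasFDerivAt
  have hf' : ContDiff ℝ 1 (fderiv ℝ f) := hf.fderiv_right (by norm_num)
  have hcurve1 : ∀ τ, HasDerivAt (fun σ : ℝ => (σ, τ)) ((1 : ℝ), (0 : ℝ)) s :=
    fun τ => (hasDerivAt_id s).prodMk (hasDerivAt_const s τ)
  have hveq : ∀ τ, deriv (fun σ => X (γ σ) τ) s = fderiv ℝ f (s, τ) (1, 0) := by
    intro τ
    have : HasDerivAt (fun σ => f (σ, τ)) (fderiv ℝ f (s, τ) (1, 0)) s :=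
      by have h := (hfd (s, τ)).comp_hasDerivAt s (hcurve1 τ); exact h
    exact this.deriv
  have hvert : ∀ p : ℝ × ℝ, fderiv ℝ f p (0, 1) = F p.2 (f p) := by
    intro p
    have h1 : HasDerivAt (fun τ => f (p.1, τ)) (fderiv ℝ f p (0, 1)) p.2 := by
      have hc : HasDerivAt (fun τ : ℝ => (p.1, τ)) ((0 : ℝ), (1 : ℝ)) p.2 :=
        (hasDerivAt_const p.2 p.1).prodMk (hasDerivAt_id p.2)
      exact (hfd p).comp_hasDerivAt p.2 hc
    have h2 : HasDerivAt (fun τ => f (p.1, τ)) (F p.2 (f p)) p.2 := hXflow (γ p.1) p.2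
    exact h1.unique h2
  have hcurve2 : HasDerivAt (fun τ : ℝ => (s, τ)) ((0 : ℝ), (1 : ℝ)) t :=
    (hasDerivAt_const t s).prodMk (hasDerivAt_id t)
  have hf'd : HasFDerivAt (fderiv ℝ f) (fderiv ℝ (fderiv ℝ f) (s, t)) (s, t) :=
    ((hf'.differentiable one_ne_zero) (s, t)).hasFDerivAt
  have hu1 : HasDerivAt (fun τ => fderiv ℝ f (s, τ)) (fderiv ℝ (fderiv ℝ f) (s, t) (0, 1)) t :=
    hf'd.comp_hasDerivAt t hcurve2
  have hu : HasDerivAt (fun τ => fderiv ℝ f (s, τ) (1, 0))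
      (fderiv ℝ (fderiv ℝ f) (s, t) (0, 1) (1, 0)) t := by
    have := hu1.clm_apply (hasDerivAt_const t ((1 : ℝ), (0 : ℝ)))
    simpa using this
  have hsymm : fderiv ℝ (fderiv ℝ f) (s, t) (0, 1) (1, 0)
      = fderiv ℝ (fderiv ℝ f) (s, t) (1, 0) (0, 1) :=
    second_derivative_symmetric hfd hf'd _ _
  have hval : fderiv ℝ (fderiv ℝ f) (s, t) (1, 0) (0, 1)
      = fderiv ℝ (F t) (X (γ s) t) (deriv (fun σ => X (γ σ) t) s) := by
    have e1 : HasFDerivAt (fun p => fderiv ℝ f p (0, 1))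
        ((ContinuousLinearMap.apply ℝ (Fin n → ℝ) ((0:ℝ), (1:ℝ))).comp
          (fderiv ℝ (fderiv ℝ f) (s, t))) (s, t) :=
      (ContinuousLinearMap.apply ℝ (Fin n → ℝ) ((0:ℝ), (1:ℝ))).hasFDerivAt.comp (s, t) hf'd
    have efun : (fun p : ℝ × ℝ => fderiv ℝ f p (0, 1)) = fun p => Function.uncurry F (p.2, f p) := by
      funext p; exact hvert p
    rw [efun] at e1
    have hFd : HasFDerivAt (Function.uncurry F)
        (fderiv ℝ (Function.uncurry F) (t, f (s, t))) (t, f (s, t)) :=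
      ((hF.differentiable one_ne_zero) _).hasFDerivAt
    have hinner : HasFDerivAt (fun p : ℝ × ℝ => (p.2, f p))
        ((ContinuousLinearMap.snd ℝ ℝ ℝ).prod (fderiv ℝ f (s, t))) (s, t) :=
      (hasFDerivAt_snd).prodMk (hfd (s, t))
    have e2 : HasFDerivAt (fun p : ℝ × ℝ => Function.uncurry F (p.2, f p))
        ((fderiv ℝ (Function.uncurry F) (t, f (s, t))).comp
          ((ContinuousLinearMap.snd ℝ ℝ ℝ).prod (fderiv ℝ f (s, t)))) (s, t) :=
      by have h := hFd.comp (s, t) hinner; exact h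
    have e3 := e1.unique e2
    have hFt : HasFDerivAt (F t)
        ((fderiv ℝ (Function.uncurry F) (t, f (s, t))).comp
          ((0 : (Fin n → ℝ) →L[ℝ] ℝ).prod (ContinuousLinearMap.id ℝ (Fin n → ℝ)))) (f (s, t)) := by
      have hc : HasFDerivAt (fun y : Fin n → ℝ => ((t : ℝ), y))
          ((0 : (Fin n → ℝ) →L[ℝ] ℝ).prod (ContinuousLinearMap.id ℝ (Fin n → ℝ))) (f (s, t)) :=
        (hasFDerivAt_const t _).prodMk (hasFDerivAt_id _)
      exact hFd.comp _ hc
    have : fderiv ℝ (fderiv ℝ f) (s, t) (1, 0) (0, 1)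
        = fderiv ℝ (Function.uncurry F) (t, f (s, t)) (0, fderiv ℝ f (s, t) (1, 0)) := by
      have := congrFun (congrArg DFunLike.coe e3) ((1 : ℝ), (0 : ℝ))
      simpa using this
    rw [this, hFt.fderiv, hveq t]
    show _ = fderiv ℝ (Function.uncurry F) (t, f (s, t)) (0, fderiv ℝ f (s, t) (1, 0))
    rfl
  have key : HasDerivAt (fun τ => fderiv ℝ f (s, τ) (1, 0))
      (fderiv ℝ (F t) (X (γ s) t) (deriv (fun σ => X (γ σ) t) s)) t := by
    rw [← hval, ← hsymm]; exact hu
  have hfuneq : (fun τ => deriv (fun σ => X (γ σ) τ) s) = fun τ => fderiv ℝ f (s, τ) (1, 0) := by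
    funext τ; exact hveq τ
  rw [hfuneq]
  exact key

/-- Differentiation step of the appendix: for `Γ(s,t) = X(γ(s), t)` with `X`
the C² flow of the time-dependent C¹ vector field `F_t`, the squared speed
`ρ(s,t) = G(Γ(s,t))(∂Γ/∂s, ∂Γ/∂s)` satisfies
`∂ρ/∂t = (L_{F_t} G)(Γ)(∂Γ/∂s, ∂Γ/∂s) ≤ 0` when `L_{F_t} G ≤ 0`. -/
theorem stmt13 (n : ℕ)
    (G : (Fin n → ℝ) → (Fin n → ℝ) → (Fin n → ℝ) → ℝ)
    (hGsymm : ∀ x φ ψ, G x φ ψ = G x ψ φ)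
    (hGlin : ∀ x ψ, IsLinearMap ℝ (fun φ => G x φ ψ))
    (hGpos : ∀ x φ, φ ≠ 0 → 0 < G x φ φ)
    (hGsmooth : ∀ φ ψ, ContDiff ℝ 1 (fun x => G x φ ψ))
    (F : ℝ → (Fin n → ℝ) → Fin n → ℝ) (hF : ContDiff ℝ 1 (Function.uncurry F))
    (X : (Fin n → ℝ) → ℝ → Fin n → ℝ) (hX : ContDiff ℝ 2 (Function.uncurry X))
    (hX0 : ∀ x, X x 0 = x)
    (hXflow : ∀ x t, HasDerivAt (X x) (F t (X x t)) t)
    (γ : ℝ → Fin n → ℝ) (hγ : ContDiff ℝ 2 γ)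
    (hLie : ∀ (t : ℝ) (x φ : Fin n → ℝ), lieDerivG n G (F t) x φ φ ≤ 0)
    (s t : ℝ) :
    HasDerivAt
      (fun τ => G (X (γ s) τ) (deriv (fun σ => X (γ σ) τ) s) (deriv (fun σ => X (γ σ) τ) s))
      (lieDerivG n G (F t) (X (γ s) t)
        (deriv (fun σ => X (γ σ) t) s) (deriv (fun σ => X (γ σ) t) s)) t ∧
    lieDerivG n G (F t) (X (γ s) t)
      (deriv (fun σ => X (γ σ) t) s) (deriv (fun σ => X (γ σ) t) s) ≤ 0 := by
  classical
  set x₀ : Fin n → ℝ := X (γ s) t with hx₀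
  set v₀ : Fin n → ℝ := deriv (fun σ => X (γ σ) t) s with hv₀
  set w : Fin n → ℝ := fderiv ℝ (F t) x₀ v₀ with hw
  have hc' : HasDerivAt (fun τ => X (γ s) τ) (F t x₀) t := hXflow (γ s) t
  have hv' : HasDerivAt (fun τ => deriv (fun σ => X (γ σ) τ) s) w t :=
    mixed_partial F hF X hX hXflow γ hγ s t
  have hvi : ∀ i, HasDerivAt (fun τ => deriv (fun σ => X (γ σ) τ) s i) (w i) t :=
    fun i => hasDerivAt_pi.1 hv' i
  -- coordinate functions of the metric
  have hg : ∀ i j : Fin n, HasDerivAt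
      (fun τ => G (X (γ s) τ) (Pi.single i 1) (Pi.single j 1))
      (fderiv ℝ (fun y => G y (Pi.single i 1) (Pi.single j 1)) x₀ (F t x₀)) t := by
    intro i j
    exact (((hGsmooth (Pi.single i 1) (Pi.single j 1)).differentiable one_ne_zero
      x₀).hasFDerivAt).comp_hasDerivAt t hc'
  -- termwise derivative
  have hterm : ∀ i j : Fin n, HasDerivAt
      (fun τ => deriv (fun σ => X (γ σ) τ) s i * deriv (fun σ => X (γ σ) τ) s j
        * G (X (γ s) τ) (Pi.single i 1) (Pi.single j 1))
      ((w i * v₀ j + v₀ i * w j) * G x₀ (Pi.single i 1) (Pi.single j 1)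
        + v₀ i * v₀ j * fderiv ℝ (fun y => G y (Pi.single i 1) (Pi.single j 1)) x₀ (F t x₀)) t :=
    fun i j => ((hvi i).mul (hvi j)).mul (hg i j)
  set S : ℝ := ∑ i, ∑ j,
      ((w i * v₀ j + v₀ i * w j) * G x₀ (Pi.single i 1) (Pi.single j 1)
        + v₀ i * v₀ j * fderiv ℝ (fun y => G y (Pi.single i 1) (Pi.single j 1)) x₀ (F t x₀))
    with hS
  have hsum : HasDerivAt
      (fun τ => ∑ i, ∑ j, deriv (fun σ => X (γ σ) τ) s i * deriv (fun σ => X (γ σ) τ) s j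
        * G (X (γ s) τ) (Pi.single i 1) (Pi.single j 1)) S t :=
    HasDerivAt.fun_sum fun i _ => HasDerivAt.fun_sum fun j _ => hterm i j
  have hfun : (fun τ => G (X (γ s) τ) (deriv (fun σ => X (γ σ) τ) s)
        (deriv (fun σ => X (γ σ) τ) s))
      = fun τ => ∑ i, ∑ j, deriv (fun σ => X (γ σ) τ) s i * deriv (fun σ => X (γ σ) τ) s j
        * G (X (γ s) τ) (Pi.single i 1) (Pi.single j 1) := by
    funext τ; exact G_expand hGsymm hGlin _ _ _
  -- identify S with the Lie derivative
  have hA : fderiv ℝ (fun y => G y v₀ v₀) x₀ (F t x₀)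
      = ∑ i, ∑ j, v₀ i * v₀ j
        * fderiv ℝ (fun y => G y (Pi.single i 1) (Pi.single j 1)) x₀ (F t x₀) := by
    have hfeq : (fun y => G y v₀ v₀)
        = fun y => ∑ i, ∑ j, v₀ i * v₀ j * G y (Pi.single i 1) (Pi.single j 1) := by
      funext y; exact G_expand hGsymm hGlin _ _ _
    have hder : HasFDerivAt (fun y => G y v₀ v₀)
        (∑ i, ∑ j, (v₀ i * v₀ j) •
          fderiv ℝ (fun y => G y (Pi.single i 1) (Pi.single j 1)) x₀) x₀ := by
      rw [hfeq]
      refine HasFDerivAt.fun_sum fun i _ => HasFDerivAt.fun_sum fun j _ => ?_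
      exact (((hGsmooth (Pi.single i 1) (Pi.single j 1)).differentiable one_ne_zero
        x₀).hasFDerivAt).const_mul (v₀ i * v₀ j)
    rw [hder.fderiv]
    simp [ContinuousLinearMap.sum_apply, smul_eq_mul]
  have hB : G x₀ w v₀ = ∑ i, ∑ j, w i * v₀ j * G x₀ (Pi.single i 1) (Pi.single j 1) :=
    G_expand hGsymm hGlin _ _ _
  have hC : G x₀ v₀ w = ∑ i, ∑ j, v₀ i * w j * G x₀ (Pi.single i 1) (Pi.single j 1) :=
    G_expand hGsymm hGlin _ _ _
  have hSlie : S = lieDerivG n G (F t) x₀ v₀ v₀ := by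
    rw [lieDerivG, ← hw, hA, hB, hC]
    rw [← Finset.sum_add_distrib, ← Finset.sum_add_distrib]
    refine Finset.sum_congr rfl fun i _ => ?_
    rw [← Finset.sum_add_distrib, ← Finset.sum_add_distrib]
    refine Finset.sum_congr rfl fun j _ => ?_
    ring
  refine ⟨?_, hLie t x₀ v₀⟩
  rw [hfun, ← hSlie]
  exact hsum
end

section
/- Let V : D → ℝ≥0 be C¹ and proper on an open set D ⊆ ℝⁿ containing 0, with V(0) = 0 and ∇V(x)·f(x) ≤ −V(x) on D, and suppose V is positive definite. Let (x(t), x̂(t)) be a solution pair such that V(x̂(t)) ≤ max{V(x̂(0)),1} for all t, d(x(t), x̂(t)) is non-increasing and tends to 0, and (d/dt)V(x̂(t)) ≤ −V(x̂(t)) + μ(d(x(t), x̂(t))) with μ continuous non-decreasing, μ(0)=0. Then x̂(t) → 0 and x(t) → 0 as t → ∞. -/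
open Set Filter

/-- Steps 2–3 assembled: for a proper positive-definite Lyapunov function `V`
on the basin `D` with `∇V·f ≤ -V`, and a solution pair `(x, xh)` such that
`V(xh)` stays bounded, the auxiliary distance `d(x, xh)` is non-increasing and
tends to `0`, and `d/dt V(xh) ≤ -V(xh) + μ(d(x, xh))`, both `xh` and `x`
converge to the origin. -/
theorem stmt17 (n : ℕ) (D : Set (Fin n → ℝ)) (hD : IsOpen D) (h0D : (0 : Fin n → ℝ) ∈ D)
    (V : (Fin n → ℝ) → ℝ) (hV : ContDiffOn ℝ 1 V D)
    (hVnn : ∀ y ∈ D, 0 ≤ V y) (hV0 : V 0 = 0)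
    (hVpos : ∀ y ∈ D, y ≠ 0 → 0 < V y)
    (hproper : ∀ r : ℝ, IsCompact {y | y ∈ D ∧ V y ≤ r})
    (f : (Fin n → ℝ) → Fin n → ℝ)
    (hdecr : ∀ y ∈ D, fderiv ℝ V y (f y) ≤ -V y)
    (d : (Fin n → ℝ) → (Fin n → ℝ) → ℝ)
    (hd0 : ∀ a b : Fin n → ℝ, d a b = 0 ↔ a = b)
    (hdsymm : ∀ a b : Fin n → ℝ, d a b = d b a)
    (hdtri : ∀ a b c : Fin n → ℝ, d a c ≤ d a b + d b c)
    (hdnn : ∀ a b : Fin n → ℝ, 0 ≤ d a b)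
    (hdcont : Continuous (Function.uncurry d))
    (hdcompat : ∀ (u : ℝ → Fin n → ℝ) (y : Fin n → ℝ),
      Tendsto (fun t => d (u t) y) atTop (nhds 0) → Tendsto u atTop (nhds y))
    (μ : ℝ → ℝ) (hμc : ContinuousOn μ (Ici 0)) (hμmono : MonotoneOn μ (Ici 0))
    (hμ0 : μ 0 = 0) (hμnn : ∀ s ≥ (0:ℝ), 0 ≤ μ s)
    (x xh : ℝ → Fin n → ℝ) (hxc : Continuous x) (hxhc : Continuous xh)
    (hxhD : ∀ t ≥ (0:ℝ), xh t ∈ D)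
    (hbound : ∀ t ≥ (0:ℝ), V (xh t) ≤ max (V (xh 0)) 1)
    (hanti : AntitoneOn (fun t => d (x t) (xh t)) (Ici 0))
    (hdto0 : Tendsto (fun t => d (x t) (xh t)) atTop (nhds 0))
    (hVder : ∀ t ≥ (0:ℝ), ∃ dv : ℝ, HasDerivAt (fun τ => V (xh τ)) dv t ∧
      dv ≤ -V (xh t) + μ (d (x t) (xh t))) :
    Tendsto xh atTop (nhds 0) ∧ Tendsto x atTop (nhds 0) := by
  set M : ℝ := max (V (xh 0)) 1 with hM
  have hM1 : (1:ℝ) ≤ M := le_max_right _ _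
  have hMpos : 0 < M := lt_of_lt_of_le one_pos hM1
  have hvnn : ∀ t ≥ (0:ℝ), 0 ≤ V (xh t) := fun t ht => hVnn _ (hxhD t ht)
  -- Step A: V (xh t) → 0
  have hA : Tendsto (fun t => V (xh t)) atTop (nhds 0) := by
    rw [tendsto_order]
    constructor
    · intro b hb
      filter_upwards [eventually_ge_atTop (0:ℝ)] with t ht
      exact lt_of_lt_of_le hb (hvnn t ht)
    · intro ε hε
      -- eventually μ (d (x t) (xh t)) ≤ ε/2
      have hμtend : Tendsto (fun t => μ (d (x t) (xh t))) atTop (nhds 0) := by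
        have hc0 : ContinuousWithinAt μ (Ici 0) 0 := hμc 0 (Set.mem_Ici.2 le_rfl)
        have := hc0.tendsto.comp (tendsto_nhdsWithin_iff.2 ⟨hdto0,
          Eventually.of_forall fun t => hdnn _ _⟩)
        rw [hμ0] at this
        exact this
      obtain ⟨T₀, hT₀⟩ := (eventually_atTop.1
        (hμtend.eventually (eventually_le_nhds (by linarith : (0:ℝ) < ε/2))))
      set T : ℝ := max T₀ 0 with hT
      have hTnn : (0:ℝ) ≤ T := le_max_right _ _
      -- g t = exp t * V (xh t) - (ε/2) * exp t is antitone on Ici T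
      have hg : AntitoneOn (fun t => Real.exp t * V (xh t) - (ε/2) * Real.exp t) (Ici T) := by
        apply antitoneOn_of_deriv_nonpos (convex_Ici T)
        · apply ContinuousOn.sub
          · exact (Real.continuous_exp.continuousOn.mul
              (hV.continuousOn.comp hxhc.continuousOn (fun t ht => hxhD t (le_trans hTnn ht))))
          · exact (continuous_const.mul Real.continuous_exp).continuousOn
        · intro t ht
          rw [interior_Ici] at ht
          have ht0 : (0:ℝ) ≤ t := le_trans hTnn (le_of_lt ht)
          obtain ⟨dv, hdv, _⟩ := hVder t ht0
          exact (((Real.hasDerivAt_exp t).mul hdv).sub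
            ((Real.hasDerivAt_exp t).const_mul (ε/2))).differentiableAt.differentiableWithinAt
        · intro t ht
          rw [interior_Ici] at ht
          have ht0 : (0:ℝ) ≤ t := le_trans hTnn (le_of_lt ht)
          obtain ⟨dv, hdv, hdvle⟩ := hVder t ht0
          have hder : HasDerivAt (fun t => Real.exp t * V (xh t) - (ε/2) * Real.exp t)
              (Real.exp t * V (xh t) + Real.exp t * dv - (ε/2) * Real.exp t) t :=
            ((Real.hasDerivAt_exp t).mul hdv).sub ((Real.hasDerivAt_exp t).const_mul (ε/2))
          rw [hder.deriv]
          have hμle : μ (d (x t) (xh t)) ≤ ε/2 := hT₀ t (le_trans (le_max_left _ _) (le_of_lt ht))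
          have hexp : 0 < Real.exp t := Real.exp_pos t
          nlinarith [hdvle]
      -- Bound: for t ≥ T, V (xh t) ≤ exp (T - t) * M + ε/2
      have hbnd : ∀ t ≥ T, V (xh t) ≤ Real.exp (T - t) * M + ε/2 := by
        intro t ht
        have := hg (Set.mem_Ici.2 le_rfl) ht ht
        have hexpt : 0 < Real.exp t := Real.exp_pos t
        have hexpT : 0 < Real.exp T := Real.exp_pos T
        have hVT : V (xh T) ≤ M := hbound T hTnn
        have key : Real.exp t * V (xh t) ≤ Real.exp T * M + ε/2 * Real.exp t := by
          simp only at this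
          nlinarith [this, hVT, hexpT, hε]
        have hmul : Real.exp (T - t) * Real.exp t = Real.exp T := by
          rw [← Real.exp_add]; ring_nf
        nlinarith [key, hmul, hexpt]
      -- exp (T - t) * M + ε/2 → ε/2 < ε
      have hsubbot : Tendsto (fun t : ℝ => T - t) atTop atBot := by
        simpa [sub_eq_add_neg] using
          tendsto_atBot_add_const_left atTop T tendsto_neg_atTop_atBot
      have htt : Tendsto (fun t => Real.exp (T - t) * M + ε/2) atTop (nhds (0 * M + ε/2)) :=
        ((Real.tendsto_exp_atBot.comp hsubbot).mul_const M).add_const (ε/2)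
      rw [zero_mul, zero_add] at htt
      filter_upwards [eventually_ge_atTop T, htt.eventually (eventually_lt_nhds (by linarith : ε/2 < ε))]
        with t h1 h2
      exact lt_of_le_of_lt (hbnd t h1) h2
  -- Step B: xh → 0
  have hxh0 : Tendsto xh atTop (nhds 0) := by
    rw [tendsto_nhds]
    intro U hUopen hU0
    set K : Set (Fin n → ℝ) := {y | y ∈ D ∧ V y ≤ M} with hK
    have hxhK : ∀ t ≥ (0:ℝ), xh t ∈ K := fun t ht => ⟨hxhD t ht, hbound t ht⟩
    have hScomp : IsCompact (K \ U) := (hproper M).diff hUopen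
    rcases (K \ U).eq_empty_or_nonempty with hSe | hSne
    · filter_upwards [eventually_ge_atTop (0:ℝ)] with t ht
      by_contra h
      exact absurd hSe (Set.nonempty_iff_ne_empty.1 ⟨xh t, hxhK t ht, h⟩)
    · obtain ⟨y₀, hy₀S, hy₀min⟩ := hScomp.exists_isMinOn hSne
        (hV.continuousOn.mono (fun y hy => hy.1.1))
      have hy₀pos : 0 < V y₀ := hVpos y₀ hy₀S.1.1 (by
        intro h; exact hy₀S.2 (h ▸ hU0))
      filter_upwards [eventually_ge_atTop (0:ℝ), hA.eventually (eventually_lt_nhds hy₀pos)]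
        with t ht hlt
      by_contra h
      exact absurd (hy₀min ⟨hxhK t ht, h⟩) (not_le.2 hlt)
  -- Step C: x → 0
  refine ⟨hxh0, hdcompat x 0 ?_⟩
  have hc0 : Continuous (fun y : Fin n → ℝ => d y 0) :=
    hdcont.comp (continuous_id.prodMk continuous_const)
  have h1 : Tendsto (fun t => d (xh t) 0) atTop (nhds 0) := by
    have := (hc0.tendsto 0).comp hxh0
    simpa [(hd0 0 0).2 rfl, Function.comp_def] using this
  have h2 : Tendsto (fun t => d (x t) (xh t) + d (xh t) 0) atTop (nhds 0) := by
    simpa using hdto0.add h1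
  exact tendsto_of_tendsto_of_tendsto_of_le_of_le tendsto_const_nhds h2
    (fun t => hdnn _ _) (fun t => hdtri _ _ _)
end
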